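/- Let K ≥ 2, ε > 0, and let v ∈ ℝ^K satisfy v_k ≠ v̄ for every k ∈ {1,…,K}, where v̄ = (1/K) Σ_{i=1}^K v_i. Then EvSoftmax_{train,ε} is differentiable at v with partial derivatives ∂EvSoftmax_{train,ε}(v)_i/∂v_j = EvSoftmax_{train,ε}(v)_i·(δ_{ij} − EvSoftmax_{train,ε}(v)_j) for all i, j ∈ {1,…,K}, where δ_{ij} is the Kronecker delta. -/

import Mathlib

open Finset

/-- The training-time modification of ev-softmax:
`EvSoftmax_{train,ε}(v)_k = (𝟙{v_k ≥ v̄} + ε) e^{v_k} / ∑_l (𝟙{v_l ≥ v̄} + ε) e^{v_l}`,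
where `v̄` is the arithmetic mean of `v`. -/
noncomputable def evSoftmaxTrain {K : ℕ} (ε : ℝ) (v : Fin K → ℝ) (k : Fin K) : ℝ :=
  (((if (∑ i : Fin K, v i) / K ≤ v k then (1 : ℝ) else 0) + ε) * Real.exp (v k)) /
    ∑ l : Fin K, ((if (∑ i : Fin K, v i) / K ≤ v l then (1 : ℝ) else 0) + ε) * Real.exp (v l)

set_option maxHeartbeats 1000000 in
/-- For `K ≥ 2`, `ε > 0`, and `v` with `v k ≠ v̄` for all `k`,
`EvSoftmax_{train,ε}` is differentiable at `v` with partial derivatives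
`∂EvSoftmax_{train,ε}(v)_i/∂v_j
  = EvSoftmax_{train,ε}(v)_i (δ_{ij} - EvSoftmax_{train,ε}(v)_j)`. -/
theorem evSoftmaxTrain_jacobian
    (K : ℕ) (hK : 2 ≤ K) (ε : ℝ) (hε : 0 < ε) (v : Fin K → ℝ)
    (hne : ∀ k, v k ≠ (∑ i : Fin K, v i) / K) :
    (∀ i : Fin K, DifferentiableAt ℝ (fun u : Fin K → ℝ => evSoftmaxTrain ε u i) v) ∧
    (∀ i j : Fin K,
      fderiv ℝ (fun u : Fin K → ℝ => evSoftmaxTrain ε u i) v (Pi.single j 1)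
        = evSoftmaxTrain ε v i *
            ((if i = j then (1 : ℝ) else 0) - evSoftmaxTrain ε v j)) := by
  haveI : NeZero K := ⟨by omega⟩
  set c : Fin K → ℝ := fun k => (if (∑ i : Fin K, v i) / K ≤ v k then (1 : ℝ) else 0) + ε
    with hcdef
  have hcpos : ∀ k, 0 < c k := by
    intro k; simp only [hcdef]; split <;> linarith
  have hmean_cont : Continuous (fun u : Fin K → ℝ => (∑ i : Fin K, u i) / K) :=
    (continuous_finset_sum _ fun i _ => continuous_apply i).div_const _
  have hev : ∀ᶠ u in nhds v, ∀ k : Fin K,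
      ((if (∑ i : Fin K, u i) / (K : ℝ) ≤ u k then (1 : ℝ) else 0) + ε) = c k := by
    rw [Filter.eventually_all]
    intro k
    rcases lt_or_gt_of_ne (hne k) with h | h
    · have hopen : IsOpen {u : Fin K → ℝ | u k < (∑ i : Fin K, u i) / K} :=
        isOpen_lt (continuous_apply k) hmean_cont
      filter_upwards [hopen.eventually_mem h] with u hu
      simp only [hcdef, if_neg (not_le.2 hu), if_neg (not_le.2 h)]
    · have hopen : IsOpen {u : Fin K → ℝ | (∑ i : Fin K, u i) / K < u k} :=
        isOpen_lt hmean_cont (continuous_apply k)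
      filter_upwards [hopen.eventually_mem h] with u hu
      simp only [hcdef, if_pos hu.le, if_pos h.le]
  -- the locally-equal smooth function
  have heq : ∀ i : Fin K, (fun u : Fin K → ℝ => evSoftmaxTrain ε u i) =ᶠ[nhds v]
      (fun u : Fin K → ℝ => (c i * Real.exp (u i)) * (∑ l : Fin K, c l * Real.exp (u l))⁻¹) := by
    intro i
    filter_upwards [hev] with u hu
    unfold evSoftmaxTrain
    rw [hu i, div_eq_mul_inv]
    congr 2
    exact Finset.sum_congr rfl fun l _ => by rw [hu l]
  have hSpos : 0 < ∑ l : Fin K, c l * Real.exp (v l) :=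
    Finset.sum_pos (fun l _ => mul_pos (hcpos l) (Real.exp_pos _)) Finset.univ_nonempty
  -- derivatives
  have hexp : ∀ l : Fin K, HasFDerivAt (fun u : Fin K → ℝ => Real.exp (u l))
      (Real.exp (v l) • (ContinuousLinearMap.proj l : (Fin K → ℝ) →L[ℝ] ℝ)) v := by
    intro l
    have hproj : HasFDerivAt (fun u : Fin K → ℝ => u l)
        (ContinuousLinearMap.proj l : (Fin K → ℝ) →L[ℝ] ℝ) v :=
      (ContinuousLinearMap.proj l : (Fin K → ℝ) →L[ℝ] ℝ).hasFDerivAt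
    exact (Real.hasDerivAt_exp (v l)).comp_hasFDerivAt v hproj
  have hS : HasFDerivAt (fun u : Fin K → ℝ => ∑ l : Fin K, c l * Real.exp (u l))
      (∑ l : Fin K, c l • (Real.exp (v l) • (ContinuousLinearMap.proj l : (Fin K → ℝ) →L[ℝ] ℝ))) v :=
    HasFDerivAt.fun_sum fun l _ => (hexp l).const_mul (c l)
  have hInv : HasFDerivAt (fun u : Fin K → ℝ => (∑ l : Fin K, c l * Real.exp (u l))⁻¹)
      ((-((∑ l : Fin K, c l * Real.exp (v l)) ^ 2)⁻¹) •
        (∑ l : Fin K, c l • (Real.exp (v l) • (ContinuousLinearMap.proj l : (Fin K → ℝ) →L[ℝ] ℝ)))) v :=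
    (hasDerivAt_inv hSpos.ne').comp_hasFDerivAt v hS
  have hf : ∀ i : Fin K, HasFDerivAt
      (fun u : Fin K → ℝ => (c i * Real.exp (u i)) * (∑ l : Fin K, c l * Real.exp (u l))⁻¹)
      ((c i * Real.exp (v i)) • ((-((∑ l : Fin K, c l * Real.exp (v l)) ^ 2)⁻¹) •
          (∑ l : Fin K, c l • (Real.exp (v l) • (ContinuousLinearMap.proj l : (Fin K → ℝ) →L[ℝ] ℝ))))
        + (∑ l : Fin K, c l * Real.exp (v l))⁻¹ •
          (c i • (Real.exp (v i) • (ContinuousLinearMap.proj i : (Fin K → ℝ) →L[ℝ] ℝ)))) v :=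
    fun i => ((hexp i).const_mul (c i)).mul hInv
  constructor
  · intro i
    exact (heq i).symm.differentiableAt_iff.mp (hf i).differentiableAt
  · intro i j
    rw [(heq i).fderiv_eq, (hf i).fderiv]
    have hval : ∀ k : Fin K, evSoftmaxTrain ε v k
        = c k * Real.exp (v k) / (∑ l : Fin K, c l * Real.exp (v l)) := fun k => rfl
    simp only [ContinuousLinearMap.add_apply, ContinuousLinearMap.smul_apply,
      ContinuousLinearMap.coe_sum', Finset.sum_apply, ContinuousLinearMap.proj_apply,
      Pi.single_apply, smul_eq_mul, mul_ite, mul_one, mul_zero, Finset.sum_ite_eq,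
      Finset.sum_ite_eq', Finset.mem_univ, if_true]
    rw [hval i, hval j]
    rcases eq_or_ne i j with rfl | hij
    · simp only [if_pos rfl, if_pos trivial]
      field_simp
      ring
    · simp only [if_neg hij, if_pos trivial]
      field_simp
      ring
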